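/- With no edge correction and any continuous kernel κ with 0 ≤ κ ≤ κ(0), κ(0) > 0, given a finite nonempty point configuration in a bounded open window W with ℓ(W) > 0, there exists h* ∈ (0,∞) such that T_κ(h*) = ℓ(W); i.e., the criterion F(h) = (T_κ(h) − ℓ(W))² attains the value 0. -/

import Mathlib

open MeasureTheory Set

set_option maxHeartbeats 1000000 in
/-- With no edge correction and a continuous kernel `κ` with
`0 ≤ κ ≤ κ 0`, `κ 0 > 0`, for a finite nonempty configuration in a bounded open
window `W` with `ℓ(W) > 0`, there is a bandwidth `h* > 0` with `T_κ(h*) = ℓ(W)`;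
equivalently the criterion `F(h) = (T_κ(h) − ℓ(W))²` attains the value `0`. -/
theorem exists_bandwidth_T_eq_measure
    {d : ℕ} (hd : 1 ≤ d) (κ : EuclideanSpace ℝ (Fin d) → ℝ)
    (hκcont : Continuous κ) (hκnn : ∀ z, 0 ≤ κ z) (hκb : ∀ z, κ z ≤ κ 0)
    (hκ0 : 0 < κ 0)
    (W : Set (EuclideanSpace ℝ (Fin d))) (hW : IsOpen W)
    (hWb : Bornology.IsBounded W) (hWpos : 0 < (volume W).toReal)
    (Φ : Finset (EuclideanSpace ℝ (Fin d))) (hΦne : Φ.Nonempty)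
    (hΦW : ∀ x ∈ Φ, x ∈ W) :
    ∃ hstar : ℝ, 0 < hstar ∧
      (∑ x ∈ Φ, ((hstar ^ d)⁻¹ * ∑ y ∈ Φ, κ (hstar⁻¹ • (x - y)))⁻¹)
        = (volume W).toReal := by
  classical
  set ℓ := (volume W).toReal with hℓ
  set n : ℝ := (Φ.card : ℝ) with hn
  have hnpos : 0 < n := by
    have h0 : 0 < Φ.card := Finset.card_pos.mpr hΦne
    rw [hn]; exact_mod_cast h0
  set S : EuclideanSpace ℝ (Fin d) → ℝ → ℝ :=
    fun x h => ∑ y ∈ Φ, κ (h⁻¹ • (x - y)) with hS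
  have hSlb : ∀ x ∈ Φ, ∀ h : ℝ, κ 0 ≤ S x h := by
    intro x hx h
    have h1 := Finset.single_le_sum (f := fun y => κ (h⁻¹ • (x - y)))
      (fun y _ => hκnn _) hx
    simpa [sub_self, smul_zero] using h1
  have hSub : ∀ x h, S x h ≤ n * κ 0 := by
    intro x h
    calc S x h ≤ ∑ _y ∈ Φ, κ 0 := Finset.sum_le_sum (fun y _ => hκb _)
    _ = n * κ 0 := by simp [hn, mul_comm]
  have hSpos : ∀ x ∈ Φ, ∀ h : ℝ, 0 < S x h :=
    fun x hx h => lt_of_lt_of_le hκ0 (hSlb x hx h)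
  set f : ℝ → ℝ := fun h => ∑ x ∈ Φ, ((h ^ d)⁻¹ * S x h)⁻¹ with hf
  have hfval : ∀ h : ℝ, 0 < h → f h = ∑ x ∈ Φ, h ^ d / S x h := by
    intro h hh
    refine Finset.sum_congr rfl fun x hx => ?_
    rw [mul_inv, inv_inv, div_eq_mul_inv]
  set a : ℝ := min 1 (ℓ * κ 0 / n) with ha
  set b : ℝ := max 1 (ℓ * κ 0) with hb
  have hapos : 0 < a := lt_min one_pos (by positivity)
  have hab : a ≤ b := le_trans (min_le_left _ _) (le_max_left _ _)
  have hbpos : 0 < b := lt_of_lt_of_le hapos hab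
  -- f a ≤ ℓ
  have hfa : f a ≤ ℓ := by
    rw [hfval a hapos]
    have had : a ^ d ≤ a := pow_le_of_le_one hapos.le (min_le_left _ _) (by omega)
    calc ∑ x ∈ Φ, a ^ d / S x a ≤ ∑ _x ∈ Φ, a ^ d / κ 0 := by
          refine Finset.sum_le_sum fun x hx => ?_
          have h2 := hSlb x hx a
          have h3 : (0:ℝ) < a ^ d := by positivity
          exact div_le_div_of_nonneg_left h3.le hκ0 h2
      _ = n * (a ^ d / κ 0) := by simp [hn, mul_comm]
      _ ≤ n * (a / κ 0) := by
          gcongr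
      _ ≤ n * ((ℓ * κ 0 / n) / κ 0) := by
          gcongr
          exact min_le_right _ _
      _ = ℓ := by
          rw [div_div, mul_comm n (κ 0), ← div_div,
            mul_div_cancel_right₀ _ hκ0.ne', mul_div_cancel₀ _ hnpos.ne']
  -- ℓ ≤ f b
  have hfb : ℓ ≤ f b := by
    rw [hfval b hbpos]
    have hbd : b ≤ b ^ d := le_self_pow₀ (le_max_left _ _) (by omega)
    calc ℓ = n * ((ℓ * κ 0) / (n * κ 0)) := by
          rw [mul_div_mul_right _ _ hκ0.ne', mul_div_cancel₀ _ hnpos.ne']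
      _ ≤ n * (b / (n * κ 0)) := by
          gcongr
          exact le_max_right _ _
      _ ≤ n * (b ^ d / (n * κ 0)) := by gcongr
      _ = ∑ _x ∈ Φ, b ^ d / (n * κ 0) := by simp [hn, mul_comm]
      _ ≤ ∑ x ∈ Φ, b ^ d / S x b := by
          refine Finset.sum_le_sum fun x hx => ?_
          have h1 := hSpos x hx b
          have h2 := hSub x b
          have h3 : (0:ℝ) < b ^ d := by positivity
          exact div_le_div_of_nonneg_left h3.le h1 h2
  -- continuity on [a,b]
  have hcont : ContinuousOn f (Icc a b) := by
    apply continuousOn_finset_sum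
    intro x hx
    have hne : ∀ h ∈ Icc a b, (h : ℝ) ≠ 0 :=
      fun h hh => ne_of_gt (lt_of_lt_of_le hapos hh.1)
    have hSc : ContinuousOn (fun h : ℝ => S x h) (Icc a b) := by
      apply continuousOn_finset_sum
      intro y hy
      exact hκcont.comp_continuousOn
        ((continuousOn_id.inv₀ hne).smul continuousOn_const)
    have hpc : ContinuousOn (fun h : ℝ => (h ^ d)⁻¹) (Icc a b) :=
      (continuousOn_pow d).inv₀ fun h hh => pow_ne_zero d (hne h hh)
    refine (hpc.mul hSc).inv₀ fun h hh => ?_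
    have h1 : 0 < h := lt_of_lt_of_le hapos hh.1
    have := hSpos x hx h
    exact mul_ne_zero (inv_ne_zero (pow_ne_zero d h1.ne')) this.ne'
  have hmem : ℓ ∈ Icc (f a) (f b) := ⟨hfa, hfb⟩
  obtain ⟨c, hc, hfc⟩ := intermediate_value_Icc hab hcont hmem
  exact ⟨c, lt_of_lt_of_le hapos hc.1, hfc⟩
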